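/- Let k ≥ 2 be an even integer and n ≥ 1. For every coloring f : [n] → {−1, 1}, the number of monochromatic solutions (x₁, …, x_k) ∈ [n]^k to x₁ + ⋯ + x_{k/2} = x_{k/2+1} + ⋯ + x_k is at least 2^{1−k} times the total number of solutions (x₁, …, x_k) ∈ [n]^k to this equation. In particular μ_E([n]) ≥ 2^{1−k} for every n, so the additive tuple equation is common over [n]. -/

import Mathlib

open Finset

/-- The set of solutions `(x₁, …, x_k) ∈ [n]^k` to the additive-tuple equation
`x₁ + ⋯ + x_{k/2} = x_{k/2+1} + ⋯ + x_k`. -/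
def tupleSolns (k n : ℕ) : Finset (Fin k → ℕ) :=
  (Fintype.piFinset fun _ => Finset.Icc 1 n).filter fun x =>
    ∑ i ∈ Finset.univ.filter (fun i : Fin k => (i : ℕ) < k / 2), x i =
      ∑ i ∈ Finset.univ.filter (fun i : Fin k => ¬ (i : ℕ) < k / 2), x i

/-- The set of additive-tuple solutions monochromatic under the coloring `f`. -/
def tupleMono (k n : ℕ) (f : ℕ → Bool) : Finset (Fin k → ℕ) :=
  (tupleSolns k n).filter fun x => ∀ i j, f (x i) = f (x j)

section Auxiliary

open Complex

/-- number of `m`-tuples from `S` with sum `s` -/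
def cnt (m : ℕ) (S : Finset ℕ) (s : ℕ) : ℕ :=
  ((Fintype.piFinset fun _ : Fin m => S).filter fun y => ∑ i, y i = s).card

/-- solutions with all entries in `S` -/
def solnsIn (k : ℕ) (S : Finset ℕ) : Finset (Fin k → ℕ) :=
  (Fintype.piFinset fun _ => S).filter fun x =>
    ∑ i ∈ Finset.univ.filter (fun i : Fin k => (i : ℕ) < k / 2), x i =
      ∑ i ∈ Finset.univ.filter (fun i : Fin k => ¬ (i : ℕ) < k / 2), x i

lemma ortho (N : ℕ) (hN : N ≠ 0) {s s' : ℕ} (hs : s < N) (hs' : s' < N) :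
    ∑ t ∈ range N, cexp (2 * Real.pi * I / N) ^ (t * s) *
      (starRingEnd ℂ) (cexp (2 * Real.pi * I / N) ^ (t * s')) =
      if s = s' then (N : ℂ) else 0 := by
  set ω : ℂ := cexp (2 * Real.pi * I / N) with hωdef
  have hω := Complex.isPrimitiveRoot_exp N hN
  have hω1 : ω ^ N = 1 := hω.pow_eq_one
  have hnorm : ‖ω‖ = 1 := norm_eq_one_of_pow_eq_one hω1 hN
  set z : ℂ := ω ^ s * (starRingEnd ℂ) (ω ^ s') with hz
  have hterm : ∀ t, ω ^ (t * s) * (starRingEnd ℂ) (ω ^ (t * s')) = z ^ t := by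
    intro t
    rw [hz, mul_pow, mul_comm t s, mul_comm t s', pow_mul, pow_mul, ← map_pow]
  simp only [hterm]
  have hzN : z ^ N = 1 := by
    rw [hz, mul_pow, ← pow_mul, mul_comm s N, pow_mul, hω1, one_pow, ← map_pow,
      ← pow_mul, mul_comm s' N, pow_mul, hω1, one_pow, map_one, one_mul]
  by_cases hss : s = s'
  · subst hss
    have hz1 : z = 1 := by
      rw [hz, Complex.mul_conj]
      norm_cast
      rw [← Complex.sq_norm]
      simp [norm_pow, hnorm]
    simp [hz1]
  · have hzne : z ≠ 1 := by
      intro h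
      have hne : ω ^ s' ≠ 0 := pow_ne_zero _ (Complex.exp_ne_zero _)
      rw [hz, ← Complex.inv_eq_conj (by rw [norm_pow, hnorm, one_pow])] at h
      exact hss (hω.pow_inj hs hs' ((mul_inv_eq_one₀ hne).mp h))
    rw [geom_sum_eq hzne, hzN, sub_self, zero_div, if_neg hss]

lemma parseval (N : ℕ) (hN : N ≠ 0) (c : ℕ → ℝ) :
    ∑ t ∈ range N, Complex.normSq (∑ s ∈ range N,
        (c s : ℂ) * cexp (2 * Real.pi * I / N) ^ (t * s)) =
      N * ∑ s ∈ range N, c s ^ 2 := by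
  set ω : ℂ := cexp (2 * Real.pi * I / N) with hωdef
  set F : ℕ → ℂ := fun t => ∑ s ∈ range N, (c s : ℂ) * ω ^ (t * s) with hF
  have key : ∑ t ∈ range N, F t * (starRingEnd ℂ) (F t) =
      (N : ℂ) * ∑ s ∈ range N, (c s : ℂ) ^ 2 := by
    calc ∑ t ∈ range N, F t * (starRingEnd ℂ) (F t)
        = ∑ t ∈ range N, ∑ s ∈ range N, ∑ s' ∈ range N,
            ((c s : ℂ) * (c s' : ℂ)) * (ω ^ (t * s) * (starRingEnd ℂ) (ω ^ (t * s'))) := by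
          refine sum_congr rfl fun t _ => ?_
          rw [hF, map_sum, sum_mul_sum]
          refine sum_congr rfl fun s _ => sum_congr rfl fun s' _ => ?_
          rw [map_mul, Complex.conj_ofReal]; ring
      _ = ∑ s ∈ range N, ∑ s' ∈ range N,
            ((c s : ℂ) * (c s' : ℂ)) * ∑ t ∈ range N,
              (ω ^ (t * s) * (starRingEnd ℂ) (ω ^ (t * s'))) := by
          rw [Finset.sum_comm]
          refine sum_congr rfl fun s _ => ?_
          rw [Finset.sum_comm]
          exact sum_congr rfl fun s' _ => (mul_sum _ _ _).symm
      _ = ∑ s ∈ range N, ((c s : ℂ) * (c s : ℂ)) * N := by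
          refine sum_congr rfl fun s hs => ?_
          rw [show ∑ s' ∈ range N, ((c s : ℂ) * (c s' : ℂ)) * ∑ t ∈ range N,
              (ω ^ (t * s) * (starRingEnd ℂ) (ω ^ (t * s'))) =
              ∑ s' ∈ range N, if s = s' then ((c s : ℂ) * (c s' : ℂ)) * N else 0 from
            sum_congr rfl fun s' hs' => by
              rw [ortho N hN (mem_range.mp hs) (mem_range.mp hs')]
              split <;> simp]
          rw [Finset.sum_ite_eq]
          simp [mem_range.mp hs]
      _ = (N : ℂ) * ∑ s ∈ range N, (c s : ℂ) ^ 2 := by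
          rw [mul_sum]
          exact sum_congr rfl fun s _ => by ring
  have h2 : ((∑ t ∈ range N, Complex.normSq (F t) : ℝ) : ℂ) =
      (((N : ℝ) * ∑ s ∈ range N, c s ^ 2 : ℝ) : ℂ) := by
    push_cast [← Complex.mul_conj]
    exact key
  exact_mod_cast h2

lemma transform (N m : ℕ) (S : Finset ℕ)
    (hb : ∀ y ∈ Fintype.piFinset fun _ : Fin m => S, ∑ i, y i < N) (t : ℕ) :
    ∑ s ∈ range N, (cnt m S s : ℂ) * cexp (2 * Real.pi * I / N) ^ (t * s) =
      (∑ x ∈ S, cexp (2 * Real.pi * I / N) ^ (t * x)) ^ m := by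
  set ω : ℂ := cexp (2 * Real.pi * I / N) with hωdef
  have h1 : (∑ x ∈ S, ω ^ (t * x)) ^ m =
      ∑ y ∈ Fintype.piFinset (fun _ : Fin m => S), ω ^ (t * ∑ i, y i) := by
    rw [show (∑ x ∈ S, ω ^ (t * x)) ^ m = ∏ _i : Fin m, ∑ x ∈ S, ω ^ (t * x) by
      rw [Finset.prod_const, Finset.card_univ, Fintype.card_fin]]
    rw [Finset.prod_univ_sum]
    refine sum_congr rfl fun y _ => ?_
    rw [Finset.prod_pow_eq_pow_sum, ← Finset.mul_sum]
  rw [h1, ← Finset.sum_fiberwise_of_maps_to (fun y hy => mem_range.mpr (hb y hy))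
    (fun y => ω ^ (t * ∑ i, y i))]
  refine sum_congr rfl fun s _ => ?_
  rw [show ∑ y ∈ (Fintype.piFinset fun _ : Fin m => S).filter fun y => ∑ i, y i = s,
      ω ^ (t * ∑ i, y i) = ∑ y ∈ (Fintype.piFinset fun _ : Fin m => S).filter
        (fun y => ∑ i, y i = s), ω ^ (t * s) from
    sum_congr rfl fun y hy => by rw [(mem_filter.mp hy).2]]
  rw [Finset.sum_const, nsmul_eq_mul, cnt]

lemma sumL (m : ℕ) (x : Fin (m + m) → ℕ) :
    ∑ i ∈ Finset.univ.filter (fun i : Fin (m + m) => (i : ℕ) < (m + m) / 2), x i =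
      ∑ i : Fin m, x (Fin.castAdd m i) := by
  have hhalf : (m + m) / 2 = m := by omega
  rw [Finset.sum_filter, hhalf, Fin.sum_univ_add]
  simp [Fin.is_lt]

lemma sumR (m : ℕ) (x : Fin (m + m) → ℕ) :
    ∑ i ∈ Finset.univ.filter (fun i : Fin (m + m) => ¬ (i : ℕ) < (m + m) / 2), x i =
      ∑ i : Fin m, x (Fin.natAdd m i) := by
  have hhalf : (m + m) / 2 = m := by omega
  rw [Finset.sum_filter, hhalf, Fin.sum_univ_add]
  simp [Fin.is_lt]

lemma card_solnsIn (m N : ℕ) (S : Finset ℕ)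
    (hb : ∀ y ∈ Fintype.piFinset fun _ : Fin m => S, ∑ i, y i < N) :
    (solnsIn (m + m) S).card = ∑ s ∈ range N, (cnt m S s) ^ 2 := by
  classical
  set P := ((Fintype.piFinset fun _ : Fin m => S) ×ˢ (Fintype.piFinset fun _ : Fin m => S)).filter
    (fun p => ∑ i, p.1 i = ∑ i, p.2 i) with hP
  have step1 : (solnsIn (m + m) S).card = P.card := by
    refine Finset.card_bij
      (fun x _ => (fun i => x (Fin.castAdd m i), fun i => x (Fin.natAdd m i))) ?_ ?_ ?_
    · intro x hx
      rw [solnsIn, mem_filter, Fintype.mem_piFinset] at hx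
      rw [hP, mem_filter, mem_product]
      refine ⟨⟨Fintype.mem_piFinset.mpr fun i => hx.1 _, Fintype.mem_piFinset.mpr fun i => hx.1 _⟩, ?_⟩
      have := hx.2
      rwa [sumL, sumR] at this
    · intro x hx x' hx' h
      funext i
      by_cases hi : (i : ℕ) < m
      · have := congrFun (congrArg Prod.fst h) ⟨(i : ℕ), hi⟩
        simpa [show Fin.castAdd m ⟨(i : ℕ), hi⟩ = i from Fin.ext rfl] using this
      · have hi2 : (i : ℕ) - m < m := by omega
        have := congrFun (congrArg Prod.snd h) ⟨(i : ℕ) - m, hi2⟩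
        have he : Fin.natAdd m ⟨(i : ℕ) - m, hi2⟩ = i := by
          apply Fin.ext
          simp only [Fin.coe_natAdd]
          exact Nat.add_sub_cancel' (Nat.le_of_not_lt hi)
        dsimp only at this
        rwa [he] at this
    · intro p hp
      rw [hP, mem_filter, mem_product] at hp
      refine ⟨fun i => if h : (i : ℕ) < m then p.1 ⟨(i : ℕ), h⟩
        else p.2 ⟨(i : ℕ) - m, by omega⟩, ?_, ?_⟩
      · rw [solnsIn, mem_filter, Fintype.mem_piFinset]
        constructor
        · intro i
          by_cases h : (i : ℕ) < m
          · simpa [h] using Fintype.mem_piFinset.mp hp.1.1 _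
          · simpa [h] using Fintype.mem_piFinset.mp hp.1.2 _
        · rw [sumL, sumR]
          have h1 : ∀ i : Fin m, (if h : ((Fin.castAdd m i : Fin (m+m)) : ℕ) < m
              then p.1 ⟨((Fin.castAdd m i : Fin (m+m)) : ℕ), h⟩
              else p.2 ⟨((Fin.castAdd m i : Fin (m+m)) : ℕ) - m, by omega⟩) = p.1 i := by
            intro i
            rw [dif_pos (by simpa using i.is_lt)]
            exact congrArg p.1 (Fin.ext rfl)
          have h2 : ∀ i : Fin m, (if h : ((Fin.natAdd m i : Fin (m+m)) : ℕ) < m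
              then p.1 ⟨((Fin.natAdd m i : Fin (m+m)) : ℕ), h⟩
              else p.2 ⟨((Fin.natAdd m i : Fin (m+m)) : ℕ) - m, by omega⟩) = p.2 i := by
            intro i
            rw [dif_neg (by simp only [Fin.coe_natAdd]; omega)]
            exact congrArg p.2 (Fin.ext (by simp only [Fin.coe_natAdd]; omega))
          rw [Finset.sum_congr rfl fun i _ => h1 i, Finset.sum_congr rfl fun i _ => h2 i]
          exact hp.2
      · refine Prod.ext ?_ ?_
        · funext i
          simp only
          rw [dif_pos (by simpa using i.is_lt)]
          exact congrArg p.1 (Fin.ext rfl)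
        · funext i
          simp only
          rw [dif_neg (by simp only [Fin.coe_natAdd]; omega)]
          exact congrArg p.2 (Fin.ext (by simp only [Fin.coe_natAdd]; omega))
  rw [step1, hP, Finset.card_filter, Finset.sum_product]
  have inner : ∀ y ∈ (Fintype.piFinset fun _ : Fin m => S),
      (∑ z ∈ (Fintype.piFinset fun _ : Fin m => S), if ∑ i, y i = ∑ i, z i then 1 else 0) =
        cnt m S (∑ i, y i) := by
    intro y _
    rw [← Finset.card_filter, cnt]
    congr 1
    exact Finset.filter_congr fun z _ => by exact eq_comm
  rw [Finset.sum_congr rfl inner, ← Finset.sum_fiberwise_of_maps_to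
    (fun y hy => mem_range.mpr (hb y hy)) (fun y => cnt m S (∑ i, y i))]
  refine sum_congr rfl fun s _ => ?_
  rw [Finset.sum_congr rfl (fun y hy => by rw [(mem_filter.mp hy).2]),
    Finset.sum_const]
  simp only [smul_eq_mul, cnt, sq]

lemma mono_eq (m n : ℕ) (hm : 1 ≤ m) (f : ℕ → Bool) :
    tupleMono (m + m) n f =
      solnsIn (m + m) ((Icc 1 n).filter fun a => f a = true) ∪
        solnsIn (m + m) ((Icc 1 n).filter fun a => ¬ f a = true) := by
  have i0 : Fin (m + m) := ⟨0, by omega⟩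
  ext x
  simp only [tupleMono, tupleSolns, solnsIn, mem_filter, mem_union,
    Fintype.mem_piFinset]
  constructor
  · rintro ⟨⟨hpi, hsum⟩, hmono⟩
    by_cases hb : f (x i0) = true
    · exact Or.inl ⟨fun i => ⟨hpi i, (hmono i i0).trans hb⟩, hsum⟩
    · exact Or.inr ⟨fun i => ⟨hpi i, fun h => hb ((hmono i0 i).trans h)⟩, hsum⟩
  · rintro (⟨hpi, hsum⟩ | ⟨hpi, hsum⟩)
    · exact ⟨⟨fun i => (hpi i).1, hsum⟩, fun i j => ((hpi i).2).trans ((hpi j).2).symm⟩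
    · refine ⟨⟨fun i => (hpi i).1, hsum⟩, fun i j => ?_⟩
      have hi := (hpi i).2
      have hj := (hpi j).2
      cases hfi : f (x i) <;> cases hfj : f (x j) <;> simp_all

lemma pw (m : ℕ) (α β : ℂ) :
    Complex.normSq ((α + β) ^ m) ≤
      2 ^ (m + m - 1) * (Complex.normSq (α ^ m) + Complex.normSq (β ^ m)) := by
  rw [← Complex.sq_norm, ← Complex.sq_norm, ← Complex.sq_norm, norm_pow, norm_pow, norm_pow,
    ← pow_mul, ← pow_mul, ← pow_mul]
  have h1 : ‖α + β‖ ^ (m * 2) ≤ (‖α‖ + ‖β‖) ^ (m * 2) :=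
    pow_le_pow_left₀ (norm_nonneg _) (norm_add_le _ _) _
  have h2 := add_pow_le (norm_nonneg α)
    (norm_nonneg β) (m * 2)
  rw [show m * 2 - 1 = m + m - 1 by omega] at h2
  exact h1.trans h2

end Auxiliary

/-- For `k ≥ 2` even and any 2-coloring of `[n]`, the number of monochromatic
solutions to `x₁ + ⋯ + x_{k/2} = x_{k/2+1} + ⋯ + x_k` is at least a `2^{1−k}`
fraction of the total number of solutions: additive tuples are common over `[n]`. -/
theorem additive_tuples_common (k : ℕ) (hk2 : 2 ≤ k) (hk : Even k)
    (n : ℕ) (hn : 1 ≤ n) (f : ℕ → Bool) :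
    ((tupleSolns k n).card : ℝ) / 2 ^ (k - 1) ≤ ((tupleMono k n f).card : ℝ) := by
  obtain ⟨m, rfl⟩ := hk
  have hm : 1 ≤ m := by omega
  set N := m * n + 1 with hNdef
  have hN0 : N ≠ 0 := by omega
  -- boundedness of sums
  have hb : ∀ S : Finset ℕ, S ⊆ Icc 1 n →
      ∀ y ∈ Fintype.piFinset fun _ : Fin m => S, ∑ i, y i < N := by
    intro S hS y hy
    have hle : ∑ i, y i ≤ m * n := by
      have := Finset.sum_le_card_nsmul Finset.univ y n (fun i _ =>
        (Finset.mem_Icc.mp (hS (Fintype.mem_piFinset.mp hy i))).2)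
      simpa [Finset.card_univ, smul_eq_mul] using this
    omega
  have hbI := hb (Icc 1 n) Finset.Subset.rfl
  have hbA := hb ((Icc 1 n).filter fun a => f a = true) (Finset.filter_subset _ _)
  have hbB := hb ((Icc 1 n).filter fun a => ¬ f a = true) (Finset.filter_subset _ _)
  -- cardinality identities
  have hT : (tupleSolns (m + m) n).card = ∑ s ∈ range N, cnt m (Icc 1 n) s ^ 2 :=
    card_solnsIn m N _ hbI
  have hd : Disjoint (solnsIn (m + m) ((Icc 1 n).filter fun a => f a = true))
      (solnsIn (m + m) ((Icc 1 n).filter fun a => ¬ f a = true)) := by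
    rw [Finset.disjoint_left]
    intro x hx hx'
    have h1 := Fintype.mem_piFinset.mp (mem_filter.mp hx).1 ⟨0, by omega⟩
    have h2 := Fintype.mem_piFinset.mp (mem_filter.mp hx').1 ⟨0, by omega⟩
    exact (Finset.mem_filter.mp h2).2 (Finset.mem_filter.mp h1).2
  have hM : (tupleMono (m + m) n f).card =
      (∑ s ∈ range N, cnt m ((Icc 1 n).filter fun a => f a = true) s ^ 2) +
        ∑ s ∈ range N, cnt m ((Icc 1 n).filter fun a => ¬ f a = true) s ^ 2 := by
    rw [mono_eq m n hm f, Finset.card_union_of_disjoint hd,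
      card_solnsIn m N _ hbA, card_solnsIn m N _ hbB]
  -- Fourier identities
  have hPar : ∀ (S : Finset ℕ), (∀ y ∈ Fintype.piFinset fun _ : Fin m => S, ∑ i, y i < N) →
      ∑ t ∈ range N, Complex.normSq
        ((∑ x ∈ S, Complex.exp (2 * Real.pi * Complex.I / N) ^ (t * x)) ^ m) =
      N * ∑ s ∈ range N, (cnt m S s : ℝ) ^ 2 := by
    intro S hbS
    rw [← parseval N hN0 (fun s => (cnt m S s : ℝ))]
    refine Finset.sum_congr rfl fun t _ => ?_
    rw [← transform N m S hbS t]
    norm_cast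
  have hPI := hPar (Icc 1 n) hbI
  have hPA := hPar ((Icc 1 n).filter fun a => f a = true) hbA
  have hPB := hPar ((Icc 1 n).filter fun a => ¬ f a = true) hbB
  -- the main inequality
  have hsplit : ∀ t : ℕ,
      (∑ x ∈ Icc 1 n, Complex.exp (2 * Real.pi * Complex.I / N) ^ (t * x)) =
      (∑ x ∈ (Icc 1 n).filter (fun a => f a = true),
        Complex.exp (2 * Real.pi * Complex.I / N) ^ (t * x)) +
      ∑ x ∈ (Icc 1 n).filter (fun a => ¬ f a = true),
        Complex.exp (2 * Real.pi * Complex.I / N) ^ (t * x) := fun t =>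
    (Finset.sum_filter_add_sum_filter_not (Icc 1 n) (fun a => f a = true) _).symm
  have hmain : (N : ℝ) * ∑ s ∈ range N, (cnt m (Icc 1 n) s : ℝ) ^ 2 ≤
      2 ^ (m + m - 1) * ((N : ℝ) *
        ((∑ s ∈ range N, (cnt m ((Icc 1 n).filter fun a => f a = true) s : ℝ) ^ 2) +
          ∑ s ∈ range N, (cnt m ((Icc 1 n).filter fun a => ¬ f a = true) s : ℝ) ^ 2)) := by
    rw [← hPI, mul_add, ← hPA, ← hPB, ← Finset.sum_add_distrib, Finset.mul_sum]
    refine Finset.sum_le_sum fun t _ => ?_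
    rw [hsplit t]
    exact pw m _ _
  have hNpos : (0 : ℝ) < N := by positivity
  have hfinal : (∑ s ∈ range N, (cnt m (Icc 1 n) s : ℝ) ^ 2) ≤
      ((∑ s ∈ range N, (cnt m ((Icc 1 n).filter fun a => f a = true) s : ℝ) ^ 2) +
        ∑ s ∈ range N, (cnt m ((Icc 1 n).filter fun a => ¬ f a = true) s : ℝ) ^ 2) *
        2 ^ (m + m - 1) := by
    have h2 : (N : ℝ) * ∑ s ∈ range N, (cnt m (Icc 1 n) s : ℝ) ^ 2 ≤ (N : ℝ) *
        (((∑ s ∈ range N, (cnt m ((Icc 1 n).filter fun a => f a = true) s : ℝ) ^ 2) +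
          ∑ s ∈ range N, (cnt m ((Icc 1 n).filter fun a => ¬ f a = true) s : ℝ) ^ 2) *
          2 ^ (m + m - 1)) := hmain.trans_eq (by ring)
    exact le_of_mul_le_mul_left h2 hNpos
  rw [div_le_iff₀ (by positivity)]
  have hTc : ((tupleSolns (m + m) n).card : ℝ) =
      ∑ s ∈ range N, (cnt m (Icc 1 n) s : ℝ) ^ 2 := by rw [hT]; push_cast; rfl
  have hMc : ((tupleMono (m + m) n f).card : ℝ) =
      (∑ s ∈ range N, (cnt m ((Icc 1 n).filter fun a => f a = true) s : ℝ) ^ 2) +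
        ∑ s ∈ range N, (cnt m ((Icc 1 n).filter fun a => ¬ f a = true) s : ℝ) ^ 2 := by
    rw [hM]; push_cast; rfl
  rw [hTc, hMc]
  exact hfinal
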